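/- Let (M,d) be a compact metric space and μ a Borel probability measure on M of full support (every nonempty open subset of M has positive μ-measure). Let μ̃ := ⨂_{n∈ℤ} μ be the product probability measure on M^ℤ. Then for every s > 0, the infimum over x ∈ M^ℤ of μ̃({y ∈ M^ℤ : d_1(x,y) < s}) is strictly positive. -/

import Mathlib

open MeasureTheory

/-- The metric `d₁` on `M^ℤ`: `d₁(x,y) = Σ_{n ∈ ℤ} d(x_n, y_n) / 2^{|n|}`. -/
noncomputable def d1 {M : Type*} [PseudoMetricSpace M] (x y : ℤ → M) : ℝ :=
  ∑' n : ℤ, dist (x n) (y n) / 2 ^ n.natAbs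

/-- Let `(M,d)` be a compact metric space and `μ` a Borel probability measure
on `M` of full support.  Let `μ̃` be the product probability measure `⨂_{n ∈ ℤ} μ` on `M^ℤ`
(characterized by its values on cylinders).  Then for every `s > 0`, the infimum over
`x ∈ M^ℤ` of `μ̃ {y : d₁(x,y) < s}` is strictly positive. -/
theorem product_measure_d1_balls_uniformly_positive
    {M : Type*} [MetricSpace M] [CompactSpace M] [MeasurableSpace M] [BorelSpace M]
    (μ : Measure M) [IsProbabilityMeasure μ]
    (hsupp : ∀ U : Set M, IsOpen U → U.Nonempty → 0 < μ U)
    (μt : Measure (ℤ → M)) [IsProbabilityMeasure μt]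
    (hprod : ∀ (s : Finset ℤ) (A : ℤ → Set M), (∀ i ∈ s, MeasurableSet (A i)) →
      μt {y | ∀ i ∈ s, y i ∈ A i} = ∏ i ∈ s, μ (A i))
    (s : ℝ) (hs : 0 < s) :
    0 < ⨅ x : ℤ → M, μt {y | d1 x y < s} := by
  have hM : Nonempty M := by
    by_contra h
    have : μ Set.univ = 1 := measure_univ
    rw [Set.univ_eq_empty_iff.2 (not_nonempty_iff.1 h), measure_empty] at this
    exact zero_ne_one this
  set D : ℝ := Metric.diam (Set.univ : Set M) with hD
  have hD0 : 0 ≤ D := Metric.diam_nonneg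
  have hdistD : ∀ a b : M, dist a b ≤ D := fun a b =>
    Metric.dist_le_diam_of_mem isCompact_univ.isBounded (Set.mem_univ a) (Set.mem_univ b)
  -- the dominating series
  set g : ℤ → ℝ := fun n => D / 2 ^ n.natAbs with hg
  have hgnat : Summable fun n : ℕ => D / 2 ^ n := by
    have : (fun n : ℕ => D / 2 ^ n) = fun n : ℕ => D * (1 / 2 : ℝ) ^ n := by
      funext n; rw [div_pow, one_pow]; ring
    rw [this]
    exact summable_geometric_two.mul_left D
  have hgsum : Summable g := by
    apply Summable.of_nat_of_neg
    · simpa [hg] using hgnat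
    · simpa [hg] using hgnat
  have hgnn : ∀ n : ℤ, 0 ≤ g n := fun n => by positivity
  -- summability of the d1 series
  have hsum : ∀ x y : ℤ → M, Summable fun n : ℤ => dist (x n) (y n) / 2 ^ n.natAbs := by
    intro x y
    apply Summable.of_nonneg_of_le (fun n => by positivity) _ hgsum
    intro n
    exact div_le_div_of_nonneg_right (hdistD _ _) (by positivity)
  -- choose a finite window F with small tail
  obtain ⟨F, hF⟩ : ∃ F : Finset ℤ, ∑' n : {n : ℤ // n ∉ F}, g n < s / 2 := by
    have := (tendsto_order.1 (tendsto_tsum_compl_atTop_zero g)).2 (s / 2) (by linarith)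
    exact this.exists
  set ε : ℝ := s / (2 * (F.card + 1)) with hε
  have hε0 : 0 < ε := by positivity
  -- the cylinder set is contained in the d1-ball
  have hsubset : ∀ x : ℤ → M,
      {y : ℤ → M | ∀ i ∈ F, y i ∈ Metric.ball (x i) ε} ⊆ {y | d1 x y < s} := by
    intro x y hy
    simp only [Set.mem_setOf_eq] at hy ⊢
    have hsx := hsum x y
    have hsplit := Summable.sum_add_tsum_compl (s := F) hsx
    have h1 : ∑ i ∈ F, dist (x i) (y i) / 2 ^ i.natAbs < s / 2 := by
      have hle : ∑ i ∈ F, dist (x i) (y i) / 2 ^ i.natAbs ≤ F.card • ε := by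
        apply Finset.sum_le_card_nsmul
        intro i hi
        have h2 : (1 : ℝ) ≤ 2 ^ i.natAbs := one_le_pow₀ one_le_two
        have := hy i hi
        rw [Metric.mem_ball, dist_comm] at this
        calc dist (x i) (y i) / 2 ^ i.natAbs ≤ dist (x i) (y i) / 1 := by
              apply div_le_div_of_nonneg_left dist_nonneg one_pos h2
          _ = dist (x i) (y i) := by ring
          _ ≤ ε := le_of_lt this
      have : (F.card : ℝ) * ε < (F.card + 1) * ε := by
        apply mul_lt_mul_of_pos_right _ hε0
        linarith
      have key : ((F.card : ℝ) + 1) * ε = s / 2 := by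
        rw [hε, mul_div_assoc', div_eq_div_iff (by positivity) (by positivity)]
        ring
      calc ∑ i ∈ F, dist (x i) (y i) / 2 ^ i.natAbs ≤ (F.card : ℝ) * ε := by
            simpa [nsmul_eq_mul] using hle
        _ < (F.card + 1) * ε := this
        _ = s / 2 := key
    have h2 : ∑' n : {n : ℤ // n ∉ F}, dist (x n) (y n) / 2 ^ (n : ℤ).natAbs < s / 2 := by
      refine lt_of_le_of_lt ?_ hF
      apply Summable.tsum_le_tsum _ (hsx.subtype _) (hgsum.subtype _)
      intro n
      exact div_le_div_of_nonneg_right (hdistD _ _) (by positivity)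
    have : d1 x y = (∑ i ∈ F, dist (x i) (y i) / 2 ^ i.natAbs)
        + ∑' n : {n : ℤ // n ∉ F}, dist (x n) (y n) / 2 ^ (n : ℤ).natAbs := by
      rw [d1, ← hsplit]; rfl
    rw [this]
    linarith
  -- a uniform lower bound on measures of ε-balls via a finite cover
  obtain ⟨t, ht⟩ := isCompact_univ.elim_finite_subcover
    (fun z : M => Metric.ball z (ε / 2)) (fun z => Metric.isOpen_ball)
    (by intro w _; exact Set.mem_iUnion.2 ⟨w, Metric.mem_ball_self (by positivity)⟩)
  have htne : t.Nonempty := by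
    obtain ⟨w⟩ := hM
    have := ht (Set.mem_univ w)
    simp only [Set.mem_iUnion] at this
    obtain ⟨z, hz, _⟩ := this
    exact ⟨z, hz⟩
  set c : ENNReal := t.inf' htne fun z => μ (Metric.ball z (ε / 2)) with hc
  have hc0 : 0 < c := by
    rw [hc, Finset.lt_inf'_iff]
    intro z _
    exact hsupp _ Metric.isOpen_ball ⟨z, Metric.mem_ball_self (by positivity)⟩
  have hball : ∀ w : M, c ≤ μ (Metric.ball w ε) := by
    intro w
    have := ht (Set.mem_univ w)
    simp only [Set.mem_iUnion] at this
    obtain ⟨z, hz, hwz⟩ := this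
    have hsub : Metric.ball z (ε / 2) ⊆ Metric.ball w ε := by
      intro v hv
      rw [Metric.mem_ball] at hv hwz ⊢
      have : dist v w ≤ dist v z + dist z w := dist_triangle v z w
      rw [dist_comm z w] at this
      linarith
    exact le_trans (Finset.inf'_le _ hz) (measure_mono hsub)
  -- put it together
  have hlow : ∀ x : ℤ → M, c ^ F.card ≤ μt {y | d1 x y < s} := by
    intro x
    have h1 : μt {y : ℤ → M | ∀ i ∈ F, y i ∈ Metric.ball (x i) ε} =
        ∏ i ∈ F, μ (Metric.ball (x i) ε) :=
      hprod F (fun i => Metric.ball (x i) ε) (fun i _ => measurableSet_ball)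
    calc c ^ F.card = ∏ _i ∈ F, c := (Finset.prod_const c).symm
      _ ≤ ∏ i ∈ F, μ (Metric.ball (x i) ε) :=
          Finset.prod_le_prod' fun i _ => hball (x i)
      _ = μt {y : ℤ → M | ∀ i ∈ F, y i ∈ Metric.ball (x i) ε} := h1.symm
      _ ≤ μt {y | d1 x y < s} := measure_mono (hsubset x)
    -- done
  exact lt_of_lt_of_le (ENNReal.pow_pos hc0 _) (le_iInf hlow)
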